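/- Let M₁, M₂ ∈ ℂ^{n×n} and let L₁, L₂ ∈ ℂ^{n×n} satisfy L₁·L₁ᴴ = M₁ and L₂·L₂ᴴ = M₂. Suppose L₁ᴴ·L₂ = U·Λ·Vᴴ is a singular value decomposition: U and V are unitary (Uᴴ·U = Iₙ, Vᴴ·V = Iₙ) and Λ = diag(s₁,…,sₙ) is diagonal with positive real entries sᵢ > 0. Let Λ^{-1/2} = diag(s₁^{-1/2},…,sₙ^{-1/2}). Then the matrices V₁ = L₁·U·Λ^{-1/2} and V₂ = L₂·V·Λ^{-1/2} satisfy: V₁ᴴ·V₂ = Iₙ, M₂·V₁ = V₂·Λ, and M₁·V₂ = V₁·Λ. -/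

import Mathlib

open Matrix

/-- SVD approach: given Cholesky-type factorizations `M₁ = L₁ L₁ᴴ`,
`M₂ = L₂ L₂ᴴ` and an SVD `L₁ᴴ L₂ = U Λ Vᴴ` with `U, V` unitary and positive
singular values, `V₁ = L₁ U Λ^{-1/2}` and `V₂ = L₂ V Λ^{-1/2}` satisfy
`V₁ᴴ V₂ = I`, `M₂ V₁ = V₂ Λ` and `M₁ V₂ = V₁ Λ`. -/
theorem svd_approach_eigvecs
    (n : ℕ) (M₁ M₂ L₁ L₂ : Matrix (Fin n) (Fin n) ℂ)
    (h₁ : L₁ * L₁ᴴ = M₁) (h₂ : L₂ * L₂ᴴ = M₂)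
    (U V : Matrix (Fin n) (Fin n) ℂ)
    (hU : Uᴴ * U = 1) (hV : Vᴴ * V = 1)
    (s : Fin n → ℝ) (hs : ∀ i, 0 < s i)
    (Lam : Matrix (Fin n) (Fin n) ℂ)
    (hLam : Lam = Matrix.diagonal fun i => ((s i : ℝ) : ℂ))
    (hsvd : L₁ᴴ * L₂ = U * Lam * Vᴴ)
    (LamInvSqrt : Matrix (Fin n) (Fin n) ℂ)
    (hLamInvSqrt : LamInvSqrt = Matrix.diagonal fun i => (((Real.sqrt (s i))⁻¹ : ℝ) : ℂ))
    (V₁ V₂ : Matrix (Fin n) (Fin n) ℂ)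
    (hV₁ : V₁ = L₁ * U * LamInvSqrt) (hV₂ : V₂ = L₂ * V * LamInvSqrt) :
    V₁ᴴ * V₂ = 1 ∧ M₂ * V₁ = V₂ * Lam ∧ M₁ * V₂ = V₁ * Lam := by
  subst h₁ h₂ hV₁ hV₂
  have hUU : U * Uᴴ = 1 := mul_eq_one_comm.mp hU
  have hVV : V * Vᴴ = 1 := mul_eq_one_comm.mp hV
  have hSH : LamInvSqrtᴴ = LamInvSqrt := by
    rw [hLamInvSqrt, Matrix.diagonal_conjTranspose]
    simp [Function.comp, Complex.star_def, Complex.conj_ofReal]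
  have hLH : Lamᴴ = Lam := by
    rw [hLam, Matrix.diagonal_conjTranspose]
    simp [Function.comp, Complex.star_def, Complex.conj_ofReal]
  have hSLS : LamInvSqrt * (Lam * LamInvSqrt) = 1 := by
    rw [hLam, hLamInvSqrt, Matrix.diagonal_mul_diagonal, Matrix.diagonal_mul_diagonal,
      ← Matrix.diagonal_one]
    refine congrArg Matrix.diagonal (funext fun i => ?_)
    have h0 : ((Real.sqrt (s i) : ℝ) : ℂ) ≠ 0 := by
      exact_mod_cast ne_of_gt (Real.sqrt_pos.mpr (hs i))
    have hm : ((s i : ℝ) : ℂ) = (Real.sqrt (s i) : ℂ) * (Real.sqrt (s i) : ℂ) := by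
      rw [← Complex.ofReal_mul, Real.mul_self_sqrt (hs i).le]
    rw [hm]
    field_simp
    rw [← mul_pow, ← Complex.ofReal_mul, one_div, inv_mul_cancel₀ (ne_of_gt (Real.sqrt_pos.mpr (hs i))), Complex.ofReal_one, one_pow]
  have hcomm : LamInvSqrt * Lam = Lam * LamInvSqrt := by
    rw [hLam, hLamInvSqrt, Matrix.diagonal_mul_diagonal, Matrix.diagonal_mul_diagonal]
    exact congrArg Matrix.diagonal (funext fun i => mul_comm _ _)
  have hsvd' : L₂ᴴ * L₁ = V * Lam * Uᴴ := by
    have := congrArg Matrix.conjTranspose hsvd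
    simpa [Matrix.conjTranspose_mul, hLH, mul_assoc] using this
  refine ⟨?_, ?_, ?_⟩
  · calc (L₁ * U * LamInvSqrt)ᴴ * (L₂ * V * LamInvSqrt)
        = LamInvSqrt * (Uᴴ * ((L₁ᴴ * L₂) * (V * LamInvSqrt))) := by
          simp [Matrix.conjTranspose_mul, hSH, mul_assoc]
      _ = LamInvSqrt * (Uᴴ * U * Lam * (Vᴴ * V) * LamInvSqrt) := by
          rw [hsvd]; simp [mul_assoc]
      _ = 1 := by rw [hU, hV]; simpa using hSLS
  · calc L₂ * L₂ᴴ * (L₁ * U * LamInvSqrt)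
        = L₂ * ((L₂ᴴ * L₁) * (U * LamInvSqrt)) := by simp [mul_assoc]
      _ = L₂ * (V * (Lam * (Uᴴ * U) * LamInvSqrt)) := by rw [hsvd']; simp [mul_assoc]
      _ = L₂ * V * LamInvSqrt * Lam := by rw [hU]; simp [mul_assoc, ← hcomm]
  · calc L₁ * L₁ᴴ * (L₂ * V * LamInvSqrt)
        = L₁ * ((L₁ᴴ * L₂) * (V * LamInvSqrt)) := by simp [mul_assoc]
      _ = L₁ * (U * (Lam * (Vᴴ * V) * LamInvSqrt)) := by rw [hsvd]; simp [mul_assoc]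
      _ = L₁ * U * LamInvSqrt * Lam := by rw [hV]; simp [mul_assoc, ← hcomm]
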